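/- Let m ≥ 1 and η_0, …, η_{m-1} ∈ {1,2} with q = Σ_{i=0}^{m-1} η_i 2^i. Let M be the m×m integer matrix whose rows are the vectors v_0, …, v_{m-1} defined by v_0 = (η_0, …, η_{m-1}) and, for 1 ≤ i ≤ m-1, v_i agreeing with v_0 except in coordinates i-1 and i where it equals η_{i-1}+2 and η_i−1 respectively. Then |det M| = q. -/

import Mathlib

open Matrix Finset

-- A: column 0 = (2^k)_k, column j (j ≥ 1) = e_{j-1}
private def matA (n : ℕ) : Matrix (Fin (n+1)) (Fin (n+1)) ℚ :=
  fun k j => if (j : ℕ) = 0 then 2 ^ (k : ℕ) else if (k : ℕ) + 1 = (j : ℕ) then 1 else 0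

private def matE (n : ℕ) (η : ℕ → ℤ) (q : ℤ) : Matrix (Fin (n+1)) (Fin (n+1)) ℚ :=
  fun i j => if i = j then 1
    else if (i : ℕ) = 0 ∧ 1 ≤ (j : ℕ) then -(η ((j : ℕ) - 1) : ℚ) / (q : ℚ) else 0

private def matB (n : ℕ) (η : ℕ → ℤ) (q : ℤ) : Matrix (Fin (n+1)) (Fin (n+1)) ℚ :=
  fun i j => if (j : ℕ) = 0 then (q : ℚ)
    else (η ((j : ℕ) - 1) : ℚ)
      + (if 1 ≤ (i : ℕ) ∧ (i : ℕ) = (j : ℕ) then 2 else 0)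
      - (if 1 ≤ (i : ℕ) ∧ (i : ℕ) + 1 = (j : ℕ) then 1 else 0)

private def matC (n : ℕ) (q : ℤ) : Matrix (Fin (n+1)) (Fin (n+1)) ℚ :=
  fun i j => if (j : ℕ) = 0 then (q : ℚ)
    else (if (i : ℕ) = (j : ℕ) then 2 else 0)
      - (if 1 ≤ (i : ℕ) ∧ (i : ℕ) + 1 = (j : ℕ) then 1 else 0)

private lemma detA (n : ℕ) : (matA n).det = (-1) ^ n * 2 ^ n := by
  rw [Matrix.det_succ_row (matA n) (Fin.last n)]
  rw [Finset.sum_eq_single 0]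
  · have h1 : matA n (Fin.last n) 0 = 2 ^ n := by simp [matA]
    have h2 : ((matA n).submatrix (Fin.last n).succAbove (0 : Fin (n+1)).succAbove) = 1 := by
      ext k j
      simp only [Matrix.submatrix_apply, Fin.succAbove_last, Fin.zero_succAbove, matA,
        Fin.val_succ, Matrix.one_apply, Fin.coe_castSucc]
      by_cases h : k = j
      · simp [h]
      · have : (k : ℕ) ≠ (j : ℕ) := fun hc => h (Fin.ext hc)
        simp [h, this]
    rw [h1, h2, Matrix.det_one]
    simp
  · intro j _ hj
    have hj' : (j : ℕ) ≠ 0 := fun hc => hj (Fin.ext hc)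
    have : matA n (Fin.last n) j = 0 := by
      have hlt := j.isLt
      simp only [matA, Fin.val_last]
      rw [if_neg hj', if_neg (by omega)]
    simp [this]
  · simp

private lemma detE (n : ℕ) (η : ℕ → ℤ) (q : ℤ) : (matE n η q).det = 1 := by
  rw [Matrix.det_of_upperTriangular]
  · simp [matE]
  · intro i j hij
    simp only [id] at hij
    have h1 : i ≠ j := fun h => by subst h; exact lt_irrefl _ hij
    have h2 : ¬ ((i : ℕ) = 0 ∧ 1 ≤ (j : ℕ)) := by
      rintro ⟨hi0, _⟩
      have : (j : ℕ) < (i : ℕ) := hij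
      omega
    simp [matE, h1, h2]
    intro hi0 hj1
    exact (h2 ⟨by simp [hi0], hj1⟩).elim

private lemma detC (n : ℕ) (q : ℤ) : (matC n q).det = q * 2 ^ n := by
  rw [Matrix.det_succ_row_zero (matC n q)]
  rw [Finset.sum_eq_single 0]
  · have h1 : matC n q 0 0 = q := by simp [matC]
    have h2 : ((matC n q).submatrix Fin.succ (0 : Fin (n+1)).succAbove).det = 2 ^ n := by
      rw [Matrix.det_of_upperTriangular]
      · have : ∀ i : Fin n, ((matC n q).submatrix Fin.succ (0 : Fin (n+1)).succAbove) i i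
            = 2 := by
          intro i
          have c1 : ¬((i:ℕ)+1 = 0) := by omega
          have c3 : ¬(1 ≤ (i:ℕ)+1 ∧ (i:ℕ)+1+1 = (i:ℕ)+1) := by omega
          simp only [Matrix.submatrix_apply, Fin.zero_succAbove, matC, Fin.val_succ]
          simp [c1, c3]
        rw [Finset.prod_congr rfl (fun i _ => this i)]
        simp
      · intro i j hij
        simp only [Function.id_def] at hij
        have hij' : (j : ℕ) < (i : ℕ) := hij
        simp only [Matrix.submatrix_apply, Fin.zero_succAbove, matC, Fin.val_succ]
        simp only [show ¬((j:ℕ)+1 = 0) by omega, show ¬((i:ℕ)+1 = (j:ℕ)+1) by omega,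
          show ¬(1 ≤ (i:ℕ)+1 ∧ (i:ℕ)+1+1 = (j:ℕ)+1) by omega, if_false]
        ring
    rw [h1, h2]
    simp
  · intro j _ hj
    have hj' : (j : ℕ) ≠ 0 := fun hc => hj (Fin.ext hc)
    have : matC n q 0 j = 0 := by simp [matC, hj']; exact if_neg (Ne.symm hj')
    simp [this]
  · simp

theorem stmt_4 (m : ℕ) (hm : 1 ≤ m) (η : ℕ → ℤ)
    (hη : ∀ i < m, η i = 1 ∨ η i = 2) (q : ℤ)
    (hq : q = ∑ i ∈ Finset.range m, η i * 2 ^ i)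
    (M : Matrix (Fin m) (Fin m) ℤ)
    (hM : ∀ i j : Fin m, M i j = η j
        + (if 1 ≤ (i : ℕ) ∧ (j : ℕ) = (i : ℕ) - 1 then 2 else 0)
        - (if 1 ≤ (i : ℕ) ∧ (j : ℕ) = (i : ℕ) then 1 else 0)) :
    |M.det| = q := by
  obtain ⟨n, rfl⟩ : ∃ n, m = n + 1 := ⟨m - 1, by omega⟩
  -- q is positive
  have hqpos : 0 < q := by
    rw [hq]
    apply Finset.sum_pos
    · intro i hi
      have := hη i (Finset.mem_range.mp hi)
      have h2 : (0:ℤ) < 2 ^ i := by positivity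
      rcases this with h | h <;> rw [h] <;> nlinarith
    · exact ⟨0, Finset.mem_range.mpr (by omega)⟩
  have hq0 : (q : ℚ) ≠ 0 := by exact_mod_cast hqpos.ne'
  -- row sums: ∑ k, M i k * 2^k = q
  have hrow : ∀ i : Fin (n+1), ∑ k : Fin (n+1), M i k * 2 ^ (k : ℕ) = q := by
    intro i
    have expand : ∀ k : Fin (n+1), M i k * 2 ^ (k : ℕ) =
        η k * 2 ^ (k : ℕ)
        + (if (k : ℕ) = (i : ℕ) - 1 then (if 1 ≤ (i : ℕ) then 2 * 2 ^ (k : ℕ) else 0) else 0)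
        - (if (k : ℕ) = (i : ℕ) then (if 1 ≤ (i : ℕ) then 2 ^ (k : ℕ) else 0) else 0) := by
      intro k
      rw [hM i k]
      by_cases h1 : 1 ≤ (i : ℕ)
      · by_cases h2 : (k : ℕ) = (i : ℕ) - 1
        · have h3 : ¬ ((k : ℕ) = (i : ℕ)) := by omega
          rw [if_pos ⟨h1, h2⟩, if_neg (fun hc => h3 hc.2), if_pos h2, if_neg h3, if_pos h1]
          ring
        · by_cases h3 : (k : ℕ) = (i : ℕ)
          · rw [if_neg (fun hc => h2 hc.2), if_pos ⟨h1, h3⟩, if_neg h2, if_pos h3, if_pos h1]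
            ring
          · rw [if_neg (fun hc => h2 hc.2), if_neg (fun hc => h3 hc.2), if_neg h2, if_neg h3]
            ring
      · simp [h1]
    rw [Finset.sum_congr rfl (fun k _ => expand k)]
    rw [Finset.sum_sub_distrib, Finset.sum_add_distrib]
    rw [Fin.sum_univ_eq_sum_range (fun k => η k * 2 ^ k)]
    rw [Fin.sum_univ_eq_sum_range
      (fun k => if k = (i : ℕ) - 1 then (if 1 ≤ (i : ℕ) then 2 * 2 ^ k else 0) else 0)]
    rw [Fin.sum_univ_eq_sum_range
      (fun k => if k = (i : ℕ) then (if 1 ≤ (i : ℕ) then (2:ℤ) ^ k else 0) else 0)]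
    rw [Finset.sum_ite_eq' (Finset.range (n+1)) ((i : ℕ) - 1)]
    rw [Finset.sum_ite_eq' (Finset.range (n+1)) (i : ℕ)]
    have hi1 : (i : ℕ) - 1 ∈ Finset.range (n+1) := Finset.mem_range.mpr (by have := i.isLt; omega)
    have hi2 : (i : ℕ) ∈ Finset.range (n+1) := Finset.mem_range.mpr i.isLt
    rw [if_pos hi1, if_pos hi2, ← hq]
    by_cases h1 : 1 ≤ (i : ℕ)
    · have : 2 * (2:ℤ) ^ ((i:ℕ) - 1) = 2 ^ (i : ℕ) := by
        rw [← pow_succ']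
        congr 1
        omega
      simp [h1, this]
    · simp [h1]
  -- the ℚ matrix
  set Mq : Matrix (Fin (n+1)) (Fin (n+1)) ℚ := M.map (Int.cast : ℤ → ℚ) with hMq
  have step1 : Mq * matA n = matB n η q := by
    ext i j
    simp only [Matrix.mul_apply, hMq, Matrix.map_apply, matA, matB]
    by_cases hj : (j : ℕ) = 0
    · simp only [hj, if_pos rfl]
      have := hrow i
      calc ∑ k : Fin (n+1), (M i k : ℚ) * (if True then 2 ^ (k:ℕ) else 0)
            = ∑ k : Fin (n+1), ((M i k * 2 ^ (k:ℕ) : ℤ) : ℚ) := by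
              apply Finset.sum_congr rfl; intro k _; push_cast; ring
        _ = ((∑ k : Fin (n+1), M i k * 2 ^ (k:ℕ) : ℤ) : ℚ) := by push_cast; ring
        _ = (q : ℚ) := by rw [this]
    · rw [if_neg hj]
      have hj1 : 1 ≤ (j : ℕ) := by omega
      set j' : Fin (n+1) := ⟨(j : ℕ) - 1, by have := j.isLt; omega⟩ with hj'
      rw [Finset.sum_eq_single j']
      · have hcond : (j' : ℕ) + 1 = (j : ℕ) := by simp [hj']; omega
        rw [if_neg hj, if_pos hcond, mul_one, hM i j']
        have e1 : (1 ≤ (i : ℕ) ∧ (j' : ℕ) = (i : ℕ) - 1) ↔ (1 ≤ (i:ℕ) ∧ (i:ℕ) = (j:ℕ)) := by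
          simp only [hj']
          constructor
          · rintro ⟨h, h2⟩; exact ⟨h, by omega⟩
          · rintro ⟨h, h2⟩; exact ⟨h, by omega⟩
        have e2 : (1 ≤ (i : ℕ) ∧ (j' : ℕ) = (i : ℕ)) ↔ (1 ≤ (i:ℕ) ∧ (i:ℕ) + 1 = (j:ℕ)) := by
          simp only [hj']
          constructor
          · rintro ⟨h, h2⟩; exact ⟨h, by omega⟩
          · rintro ⟨h, h2⟩; exact ⟨h, by omega⟩
        rw [if_congr e1 rfl rfl, if_congr e2 rfl rfl]
        have hjj : (j' : ℕ) = (j : ℕ) - 1 := by simp [hj']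
        push_cast
        try rw [hjj]
      · intro k _ hk
        have : (k : ℕ) + 1 ≠ (j : ℕ) := by
          intro hc
          apply hk
          apply Fin.ext
          simp [hj']
          omega
        rw [if_neg hj, if_neg this, mul_zero]
      · simp
  have step2 : matB n η q * matE n η q = matC n q := by
    ext i j
    simp only [Matrix.mul_apply]
    by_cases hj : (j : ℕ) = 0
    · have hjz : j = 0 := Fin.ext (by simpa using hj)
      subst hjz
      rw [Finset.sum_eq_single 0]
      · simp [matE, matB, matC]
      · intro k _ hk
        have h1 : k ≠ 0 := hk
        have h2 : ¬ ((k : ℕ) = 0) := fun hc => hk (Fin.ext (by simpa using hc))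
        simp [matE, h1, h2]
      · simp
    · have hj1 : 1 ≤ (j : ℕ) := by omega
      have hjne : (0 : Fin (n+1)) ≠ j := by
        intro hc; rw [← hc] at hj; simp at hj
      have hsplit : ∀ k : Fin (n+1), matE n η q k j =
          (if k = j then 1 else 0) + (if k = 0 then -(η ((j:ℕ)-1) : ℚ) / q else 0) := by
        intro k
        by_cases h1 : k = j
        · subst h1
          have : k ≠ 0 := fun hc => hjne (by rw [← hc])
          simp [matE, this]
        · by_cases h2 : k = 0
          · subst h2
            simp [matE, h1, hj1]
          · have h2' : ¬ ((k : ℕ) = 0) := fun hc => h2 (Fin.ext (by simpa using hc))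
            simp [matE, h1, h2, h2']
      rw [Finset.sum_congr rfl (fun k _ => by rw [hsplit k])]
      simp only [mul_add, mul_ite, mul_one, mul_zero, Finset.sum_add_distrib,
        Finset.sum_ite_eq', Finset.mem_univ, if_pos]
      have hB0 : matB n η q i 0 = q := by simp [matB]
      rw [hB0]
      have : (q : ℚ) * (-(η ((j:ℕ)-1) : ℚ) / q) = -(η ((j:ℕ)-1) : ℚ) := by
        field_simp
        try ring
      rw [this]
      simp only [matB, matC, if_neg hj]
      have ec : (1 ≤ (i:ℕ) ∧ (i:ℕ) = (j:ℕ)) ↔ ((i:ℕ) = (j:ℕ)) := by omega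
      rw [if_congr ec rfl rfl]
      ring
  -- combine
  have hdet : Mq.det * ((-1)^n * 2^n) = (q : ℚ) * 2^n := by
    calc Mq.det * ((-1)^n * 2^n) = Mq.det * (matA n).det := by rw [detA]
      _ = (Mq * matA n).det := (Matrix.det_mul _ _).symm
      _ = ((Mq * matA n).det) * (matE n η q).det := by rw [detE]; ring
      _ = (Mq * matA n * matE n η q).det := (Matrix.det_mul _ _).symm
      _ = (matC n q).det := by rw [step1, step2]
      _ = (q : ℚ) * 2^n := detC n q
  have h2n : ((2:ℚ)^n) ≠ 0 := by positivity
  have hdetq : Mq.det = (-1)^n * q := by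
    have hne : ((-1:ℚ)^n * 2^n) ≠ 0 := by
      apply mul_ne_zero _ h2n
      apply pow_ne_zero; norm_num
    apply mul_right_cancel₀ hne
    rw [hdet]
    have hsq : ((-1:ℚ)^n) * ((-1:ℚ)^n) = 1 := by
      rw [← pow_add, ← two_mul, pow_mul]; norm_num
    calc (q:ℚ) * 2^n = (((-1:ℚ)^n) * ((-1:ℚ)^n)) * ((q:ℚ) * 2^n) := by rw [hsq]; ring
      _ = (-1)^n * q * ((-1)^n * 2^n) := by ring
  -- back to ℤ
  have hcast : ((M.det : ℤ) : ℚ) = Mq.det := by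
    rw [hMq]
    exact RingHom.map_det (Int.castRingHom ℚ) M
  have hZ : M.det = (-1)^n * q := by
    have : ((M.det : ℤ) : ℚ) = (((-1)^n * q : ℤ) : ℚ) := by
      rw [hcast, hdetq]; push_cast; ring
    exact_mod_cast this
  rw [hZ, abs_mul, abs_pow, abs_neg, abs_one, one_pow, one_mul, abs_of_pos hqpos]
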